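/- Let n ≥ 1. The partial-sums map F : ℕ̄ⁿ → ℕ̄ⁿ_↗, F(m) = (m_1, m_1+m_2, …, m_1+⋯+m_n) (sums in ℕ̄, with +∞ absorbing), is continuous and surjective, and the induced map from the quotient space ℕ̄ⁿ/R_∞ (with the quotient topology) to ℕ̄ⁿ_↗ is a homeomorphism. -/

import Mathlib

/-! Tuples in `ℕ̄ⁿ = (ℕ∞)ⁿ` (here `Fin n → ℕ∞`), their anchor and index (`0`-based: the
paper's `ε(m)` resp. `ι(m)`, with values in `{1, …, n+1}`, equals `anchor n m + 1` resp.
`indexv n m + 1`), partial sums, and the equivalence relation `R_∞`. -/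

/-- The (`0`-based) *anchor* of `m ∈ ℕ̄ⁿ`: the least `i` with `m i = ⊤`, and `n` if there is
no such `i` (the convention `m_{n+1} := +∞` of the paper). -/
noncomputable def anchor (n : ℕ) (m : Fin n → ℕ∞) : ℕ :=
  sInf {i : ℕ | n ≤ i ∨ ∃ h : i < n, m ⟨i, h⟩ = ⊤}

/-- The (`0`-based) *index* of `m ∈ ℕ̄ⁿ`: the least `i` with `m i ≠ 0`, and `n` if there is
no such `i` (the convention `m_{n+1} := +∞` of the paper). -/
noncomputable def indexv (n : ℕ) (m : Fin n → ℕ∞) : ℕ :=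
  sInf {i : ℕ | n ≤ i ∨ ∃ h : i < n, m ⟨i, h⟩ ≠ 0}

/-- The partial-sums map `ℕ̄ⁿ → ℕ̄ⁿ`, `m ↦ (m₁, m₁+m₂, …, m₁+⋯+m_n)` (`+∞` absorbing). -/
def psumE {n : ℕ} (m : Fin n → ℕ∞) : Fin n → ℕ∞ :=
  fun i => ∑ j ∈ Finset.Iic i, m j

/-- The partial-sums map `ℤⁿ → ℤⁿ`, `k ↦ (k₁, k₁+k₂, …, k₁+⋯+k_n)`. -/
def psumZ {n : ℕ} (k : Fin n → ℤ) : Fin n → ℤ :=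
  fun i => ∑ j ∈ Finset.Iic i, k j

/-- The equivalence relation `R_∞` on `ℕ̄ⁿ`: `(m, m') ∈ R_∞` iff `ε(m) = ε(m')` and
`mᵢ = m'ᵢ` for all `i < ε(m)`. -/
def Rinf (n : ℕ) (m m' : Fin n → ℕ∞) : Prop :=
  anchor n m = anchor n m' ∧ ∀ i : Fin n, (i : ℕ) < anchor n m → m i = m' i

/-- The sum `k + m ∈ ℕ̄` of `k : ℤ` and `m : ℕ̄` (with `k + ∞ = ∞`; for finite `m` the value
is clamped to `0` when `m + k < 0`, which is immaterial under the condition `m + k ≥ 0`). -/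
def addZE (k : ℤ) (m : ℕ∞) : ℕ∞ :=
  if m = ⊤ then ⊤ else ((((m.toNat : ℤ) + k).toNat : ℕ) : ℕ∞)

/-- The componentwise sum `k + m ∈ ℕ̄ⁿ` of `k : ℤⁿ` and `m : ℕ̄ⁿ`. -/
def addZv {n : ℕ} (k : Fin n → ℤ) (m : Fin n → ℕ∞) : Fin n → ℕ∞ :=
  fun i => addZE (k i) (m i)

/-- The condition `k + m ∈ ℕ̄ⁿ`: every component of the sum is `+∞` or a nonnegative
integer. -/
def okAdd {n : ℕ} (k : Fin n → ℤ) (m : Fin n → ℕ∞) : Prop :=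
  ∀ i : Fin n, m i = ⊤ ∨ 0 ≤ ((m i).toNat : ℤ) + k i

/-- `R_∞` as a setoid on `ℕ̄ⁿ`. -/
def rinfSetoid (n : ℕ) : Setoid (Fin n → ℕ∞) where
  r := Rinf n
  iseqv := by
    constructor
    · exact fun m => ⟨rfl, fun _ _ => rfl⟩
    · intro m m' h
      refine ⟨h.1.symm, fun i hi => ?_⟩
      rw [← h.1] at hi
      exact (h.2 i hi).symm
    · intro a b c h1 h2
      refine ⟨h1.1.trans h2.1, fun i hi => ?_⟩
      refine (h1.2 i hi).trans (h2.2 i ?_)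
      rwa [← h1.1]

/-- The partial-sums map `F : ℕ̄ⁿ → ℕ̄ⁿ_↗` as a map into the space of increasing tuples. -/
def FMap (n : ℕ) (m : Fin n → ℕ∞) : {k : Fin n → ℕ∞ // Monotone k} :=
  ⟨psumE m, fun i i' h => Finset.sum_le_sum_of_subset (Finset.Iic_subset_Iic.mpr h)⟩

lemma anchor_le (n : ℕ) (m : Fin n → ℕ∞) : anchor n m ≤ n := Nat.sInf_le (Or.inl le_rfl)

lemma anchor_le_of_top {n : ℕ} {m : Fin n → ℕ∞} (i : Fin n) (h : m i = ⊤) :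
    anchor n m ≤ (i : ℕ) := by
  apply Nat.sInf_le
  exact Or.inr ⟨i.2, by simpa using h⟩

lemma ne_top_of_lt_anchor {n : ℕ} {m : Fin n → ℕ∞} (i : Fin n) (hi : (i : ℕ) < anchor n m) :
    m i ≠ ⊤ := fun h => absurd (anchor_le_of_top i h) (by omega)

lemma anchor_mem (n : ℕ) (m : Fin n → ℕ∞) :
    anchor n m ∈ {i : ℕ | n ≤ i ∨ ∃ h : i < n, m ⟨i, h⟩ = ⊤} :=
  Nat.sInf_mem ⟨n, Or.inl le_rfl⟩

lemma anchor_eq_top {n : ℕ} {m : Fin n → ℕ∞} (h : anchor n m < n) :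
    m ⟨anchor n m, h⟩ = ⊤ := by
  rcases anchor_mem n m with h' | ⟨h1, h2⟩
  · omega
  · exact h2

lemma psumE_eq_top_iff {n : ℕ} (m : Fin n → ℕ∞) (i : Fin n) :
    psumE m i = ⊤ ↔ anchor n m ≤ (i : ℕ) := by
  rw [psumE, ENat.sum_eq_top]
  constructor
  · rintro ⟨j, hj, hjt⟩
    exact (anchor_le_of_top j hjt).trans (Fin.le_def.mp (Finset.mem_Iic.mp hj))
  · intro h
    have hlt : anchor n m < n := lt_of_le_of_lt h i.2
    exact ⟨⟨anchor n m, hlt⟩, Finset.mem_Iic.mpr h, anchor_eq_top hlt⟩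

lemma Iic_zero_fin {n : ℕ} (h : 0 < n) : Finset.Iic (⟨0, h⟩ : Fin n) = {⟨0, h⟩} := by
  ext x; simp [Fin.le_def, Fin.ext_iff, Nat.le_zero]

lemma Iic_succ_fin {n : ℕ} (j : ℕ) (h : j + 1 < n) :
    Finset.Iic (⟨j + 1, h⟩ : Fin n) = insert ⟨j + 1, h⟩ (Finset.Iic ⟨j, by omega⟩) := by
  ext x; simp [Fin.le_def, Fin.ext_iff]; omega

lemma psumE_zero {n : ℕ} (m : Fin n → ℕ∞) (h : 0 < n) : psumE m ⟨0, h⟩ = m ⟨0, h⟩ := by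
  rw [psumE, Iic_zero_fin, Finset.sum_singleton]

lemma psumE_succ {n : ℕ} (m : Fin n → ℕ∞) (j : ℕ) (h : j + 1 < n) :
    psumE m ⟨j + 1, h⟩ = psumE m ⟨j, by omega⟩ + m ⟨j + 1, h⟩ := by
  rw [psumE, Iic_succ_fin j h, Finset.sum_insert (by simp [Fin.le_def]), psumE, add_comm]


lemma psumE_congr {n : ℕ} {m m' : Fin n → ℕ∞} (h : Rinf n m m') : psumE m = psumE m' := by
  funext i
  by_cases hi : anchor n m ≤ (i : ℕ)
  · rw [(psumE_eq_top_iff m i).mpr hi, eq_comm, psumE_eq_top_iff, ← h.1]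
    exact hi
  · exact Finset.sum_congr rfl fun j hj =>
      h.2 j (lt_of_le_of_lt (Fin.le_def.mp (Finset.mem_Iic.mp hj)) (by omega))

lemma anchor_le_anchor {n : ℕ} {m m' : Fin n → ℕ∞} (h : psumE m = psumE m') :
    anchor n m' ≤ anchor n m := by
  by_cases ha : anchor n m < n
  · have : psumE m' ⟨anchor n m, ha⟩ = ⊤ := by
      rw [← h, psumE_eq_top_iff]
    exact (psumE_eq_top_iff m' _).mp this
  · exact (anchor_le n m').trans (by omega)

lemma psumE_inj {n : ℕ} {m m' : Fin n → ℕ∞} (h : psumE m = psumE m') : Rinf n m m' := by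
  have ha : anchor n m = anchor n m' :=
    le_antisymm (anchor_le_anchor h.symm) (anchor_le_anchor h)
  refine ⟨ha, ?_⟩
  have key : ∀ j : ℕ, ∀ hj : j < n, j < anchor n m → m ⟨j, hj⟩ = m' ⟨j, hj⟩ := by
    intro j
    induction j with
    | zero =>
      intro hj _
      rw [← psumE_zero m hj, ← psumE_zero m' hj, h]
    | succ k ih =>
      intro hj hlt
      have hk : psumE m ⟨k, by omega⟩ ≠ ⊤ := by
        intro hc; rw [psumE_eq_top_iff] at hc; simp only [Fin.val_mk] at hc; omega
      have h1 := psumE_succ m k hj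
      have h2 := psumE_succ m' k hj
      rw [h] at h1 hk
      rw [h1] at h2
      exact WithTop.add_left_cancel hk h2
  exact fun i hi => by simpa using key i i.2 hi

lemma psumE_surj {n : ℕ} (k : Fin n → ℕ∞) (hk : Monotone k) : ∃ m, psumE m = k := by
  refine ⟨fun i => k i - (if h : (i : ℕ) = 0 then 0 else k ⟨(i : ℕ) - 1, by omega⟩), ?_⟩
  funext i
  obtain ⟨j, hj⟩ := i
  induction j with
  | zero =>
    rw [psumE_zero _ hj]
    simp
  | succ l ih =>
    rw [psumE_succ _ l hj, ih (by omega)]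
    have : ((⟨l + 1, hj⟩ : Fin n) : ℕ) ≠ 0 := by simp
    simp only [this, dif_neg, Nat.add_sub_cancel]
    exact add_tsub_cancel_of_le (hk (by simp [Fin.le_def]))


lemma continuous_FMap (n : ℕ) : Continuous (FMap n) := by
  refine Continuous.subtype_mk ?_ _
  exact continuous_pi fun i => continuous_finset_sum _ fun j _ => continuous_apply j

lemma FMap_surj (n : ℕ) : Function.Surjective (FMap n) := by
  rintro ⟨k, hk⟩
  obtain ⟨m, hm⟩ := psumE_surj k hk
  exact ⟨m, Subtype.ext hm⟩

/-- For `n ≥ 1`, the partial-sums map `F : ℕ̄ⁿ → ℕ̄ⁿ_↗` is continuous and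
surjective, and the induced map from the quotient `ℕ̄ⁿ/R_∞` (with the quotient topology)
to `ℕ̄ⁿ_↗` (with the subspace topology of the product `ℕ̄ⁿ`) is a homeomorphism. -/
theorem stmt_10 (n : ℕ) (hn : 1 ≤ n) :
    Continuous (FMap n) ∧ Function.Surjective (FMap n) ∧
    ∃ h : Quotient (rinfSetoid n) ≃ₜ {k : Fin n → ℕ∞ // Monotone k},
      ∀ m : Fin n → ℕ∞, h (Quotient.mk (rinfSetoid n) m) = FMap n m := by
  refine ⟨continuous_FMap n, FMap_surj n, ?_⟩
  have hcong : ∀ m m' : Fin n → ℕ∞, Rinf n m m' → FMap n m = FMap n m' :=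
    fun m m' h => Subtype.ext (psumE_congr h)
  let e : Quotient (rinfSetoid n) ≃ {k : Fin n → ℕ∞ // Monotone k} :=
    Equiv.ofBijective (Quotient.lift (FMap n) hcong)
      ⟨by rintro ⟨a⟩ ⟨b⟩ hab
          exact Quotient.sound (psumE_inj (congrArg Subtype.val hab)),
       by intro k
          obtain ⟨m, hm⟩ := FMap_surj n k
          exact ⟨Quotient.mk (rinfSetoid n) m, hm⟩⟩
  have hc : Continuous (Quotient.lift (FMap n) hcong) := Continuous.quotient_lift (s := rinfSetoid n) (continuous_FMap n) hcong
  exact ⟨Continuous.homeoOfEquivCompactToT2 (f := e) hc, fun m => rfl⟩
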